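/- arXiv:2510.17451 — 4 statements merged into one kernel-verified Lean document; each statement's English description precedes it below -/
import Mathlib

section
/- Let G be a simple graph, let S be a finite shattered set of G, let Z be a finite set of vertices of G, and let u, v ∈ S be distinct vertices with u ∉ Z, v ∉ Z, such that u and v are not reachable from each other in the subgraph of G induced on the complement of Z (i.e., Z separates u from v). Then 2^{|S| − 2} ≤ |Z| (equivalently, |S| ≤ log₂ |Z| + 2). -/
/-- If `S` is a finite shattered set of a simple graph `G`, `Z` is a finite
vertex set, and `u, v ∈ S` are distinct vertices outside `Z` that are not reachable from
each other in the subgraph induced on the complement of `Z`, then `2 ^ (|S| - 2) ≤ |Z|`. -/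
theorem stmt_6 {V : Type*} (G : SimpleGraph V) (S Z : Set V)
    (hSfin : S.Finite) (hZfin : Z.Finite)
    (hshat : ∀ A ⊆ S, ∃ w : V, G.neighborSet w ∩ S = A)
    (u v : V) (hu : u ∈ S) (hv : v ∈ S) (huv : u ≠ v)
    (huZ : u ∉ Z) (hvZ : v ∉ Z)
    (hsep : ¬ (G.induce (Zᶜ : Set V)).Reachable ⟨u, huZ⟩ ⟨v, hvZ⟩) :
    2 ^ (S.ncard - 2) ≤ Z.ncard := by
  classical
  set s : Finset V := hSfin.toFinset with hs
  have hmem_s : ∀ x, x ∈ s ↔ x ∈ S := fun x => hSfin.mem_toFinset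
  set t : Finset V := s \ {u, v} with ht
  -- witness function
  have hwit : ∀ A : Finset V, A ∈ t.powerset →
      ∃ w : V, G.neighborSet w ∩ S = (↑A ∪ {u, v} : Set V) := by
    intro A hA
    apply hshat
    intro x hx
    rcases hx with hx | hx
    · have : x ∈ t := Finset.mem_powerset.mp hA hx
      exact (hmem_s x).mp (Finset.mem_sdiff.mp this).1
    · rcases hx with rfl | rfl
      · exact hu
      · exact hv
  choose f hf using hwit
  have hfZ : ∀ A (hA : A ∈ t.powerset), f A hA ∈ Z := by
    intro A hA
    by_contra hfz
    have hau : G.Adj (f A hA) u := by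
      have : u ∈ G.neighborSet (f A hA) ∩ S := by
        rw [hf A hA]; right; left; rfl
      exact this.1
    have hav : G.Adj (f A hA) v := by
      have : v ∈ G.neighborSet (f A hA) ∩ S := by
        rw [hf A hA]; right; right; rfl
      exact this.1
    apply hsep
    have h1 : (G.induce (Zᶜ : Set V)).Adj ⟨u, huZ⟩ ⟨f A hA, hfz⟩ := hau.symm
    have h2 : (G.induce (Zᶜ : Set V)).Adj ⟨f A hA, hfz⟩ ⟨v, hvZ⟩ := hav
    exact h1.reachable.trans h2.reachable
  -- injectivity
  have hinj : ∀ A (hA : A ∈ t.powerset) B (hB : B ∈ t.powerset),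
      f A hA = f B hB → A = B := by
    intro A hA B hB heq
    have hAB : (↑A ∪ {u, v} : Set V) = (↑B ∪ {u, v} : Set V) := by
      rw [← hf A hA, ← hf B hB, heq]
    have hnot : ∀ (C : Finset V), C ∈ t.powerset → ∀ x ∈ C, x ≠ u ∧ x ≠ v := by
      intro C hC x hx
      have := Finset.mem_sdiff.mp (Finset.mem_powerset.mp hC hx)
      constructor <;> intro h <;> exact this.2 (by simp [h])
    apply Finset.ext
    intro x
    constructor
    · intro hx
      have : x ∈ (↑B ∪ {u, v} : Set V) := hAB ▸ (Or.inl (by exact_mod_cast hx))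
      rcases this with h | h
      · exact_mod_cast h
      · rcases hnot A hA x hx with ⟨h1, h2⟩
        rcases h with rfl | rfl
        · exact absurd rfl h1
        · exact absurd rfl h2
    · intro hx
      have : x ∈ (↑A ∪ {u, v} : Set V) := hAB ▸ (Or.inl (by exact_mod_cast hx))
      rcases this with h | h
      · exact_mod_cast h
      · rcases hnot B hB x hx with ⟨h1, h2⟩
        rcases h with rfl | rfl
        · exact absurd rfl h1
        · exact absurd rfl h2
  -- cardinality
  have hcard : t.powerset.card ≤ hZfin.toFinset.card := by
    apply Finset.card_le_card_of_injOn (fun A => if h : A ∈ t.powerset then f A h else u)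
    · intro A hA
      simp only [Finset.mem_coe] at hA; simp only [hA, dif_pos]
      exact hZfin.mem_toFinset.mpr (hfZ A hA)
    · intro A hA B hB heq
      simp only [Finset.mem_coe] at hA hB
      simp only [hA, hB, dif_pos] at heq
      exact hinj A hA B hB heq
  have htcard : t.card = S.ncard - 2 := by
    have hsub : ({u, v} : Finset V) ⊆ s := by
      intro x hx
      rcases Finset.mem_insert.mp hx with rfl | hx
      · exact (hmem_s x).mpr hu
      · rw [Finset.mem_singleton] at hx; subst hx; exact (hmem_s x).mpr hv
    rw [ht, Finset.card_sdiff_of_subset hsub, Finset.card_pair huv]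
    congr 1
    exact (Set.ncard_eq_toFinset_card S hSfin).symm
  calc 2 ^ (S.ncard - 2) = t.powerset.card := by
        rw [Finset.card_powerset, htcard]
      _ ≤ hZfin.toFinset.card := hcard
      _ = Z.ncard := (Set.ncard_eq_toFinset_card Z hZfin).symm
end

section
/- Let G be a finite simple graph, let w ≥ 1 be a natural number, and let (T, β) be a tree-decomposition of G of width at most w, i.e.: T is a finite nonempty tree (a connected acyclic simple graph); β assigns to each node t of T a finite set β(t) of vertices of G with |β(t)| ≤ w + 1; for every edge uv of G there is a node t with u, v ∈ β(t); and for every vertex v of G the set of nodes {t : v ∈ β(t)} is nonempty and induces a connected subgraph of T. Then every finite shattered set S of G satisfies: either 2^{|S| − 2} ≤ w (equivalently |S| ≤ log₂ w + 2), or there exists a node t of T with S ⊆ β(t). -/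
open SimpleGraph

namespace Stmt7Aux

variable {ι : Type*}

/-- The inclusion homomorphism from an induced subgraph. -/
def inducedHom (T : SimpleGraph ι) (P : Set ι) : T.induce P →g T where
  toFun := Subtype.val
  map_rel' := fun h => h

lemma bridge_lemma {T : SimpleGraph ι} (hT : T.IsAcyclic) {t t' : ι} (h : T.Adj t t') :
    ¬ (T.deleteEdges {s(t, t')}).Reachable t t' := by
  have hB := (isAcyclic_iff_forall_adj_isBridge.mp hT) h
  rw [isBridge_iff] at hB
  exact hB

lemma exit_lemma {T : SimpleGraph ι} {P : Set ι} {a b : ι} (p : T.Walk a b) :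
    p.edges.Nodup → a ∈ P → b ∉ P →
    ∃ t t', t ∈ P ∧ t' ∉ P ∧ T.Adj t t' ∧ (T.deleteEdges {s(t, t')}).Reachable t' b := by
  induction p with
  | nil => intro _ ha hb; exact absurd ha hb
  | @cons u v c h q ih =>
    intro hnd ha hb
    rw [Walk.edges_cons, List.nodup_cons] at hnd
    by_cases hv : v ∈ P
    · exact ih hnd.2 hv hb
    · refine ⟨u, v, ha, hv, h, ⟨q.toDeleteEdges _ ?_⟩⟩
      intro e he hes
      rw [Set.mem_singleton_iff] at hes
      exact hnd.1 (hes ▸ he)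

lemma cross_lemma {T : SimpleGraph ι} {P : Set ι} (hP : (T.induce P).Connected)
    {a b t t' : ι} (ha : a ∈ P) (hb : b ∈ P)
    (hr : ¬ (T.deleteEdges {s(t, t')}).Reachable a b) : t ∈ P ∧ t' ∈ P := by
  obtain ⟨w0⟩ := hP.preconnected ⟨a, ha⟩ ⟨b, hb⟩
  let w := w0.map (inducedHom T P)
  have hsupp : ∀ x ∈ w.support, x ∈ P := by
    intro x hx
    rw [Walk.support_map, List.mem_map] at hx
    obtain ⟨y, -, rfl⟩ := hx
    exact y.2
  by_cases he : s(t, t') ∈ w.edges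
  · exact ⟨hsupp t (w.fst_mem_support_of_mem_edges he),
      hsupp t' (w.snd_mem_support_of_mem_edges he)⟩
  · exact absurd ⟨w.toDeleteEdges _ (fun e hew hes => he ((Set.mem_singleton_iff.mp hes) ▸ hew))⟩ hr

end Stmt7Aux

/-- Let `(T, β)` be a tree-decomposition of width at most `w ≥ 1` of a finite
simple graph `G`. Then every finite shattered set `S` of `G` satisfies `2 ^ (|S| - 2) ≤ w`
or is entirely contained in some bag. -/
theorem stmt_7 {V ι : Type*} [Fintype V] (G : SimpleGraph V)
    (w : ℕ) (hw : 1 ≤ w) [Fintype ι] [Nonempty ι]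
    (T : SimpleGraph ι) (hT : T.IsTree)
    (β : ι → Finset V) (hwidth : ∀ t, (β t).card ≤ w + 1)
    (hedge : ∀ u v : V, G.Adj u v → ∃ t, u ∈ β t ∧ v ∈ β t)
    (hconn : ∀ v : V, (T.induce {t : ι | v ∈ β t}).Connected)
    (S : Finset V)
    (hshat : ∀ A ⊆ S, ∃ x : V, G.neighborSet x ∩ (S : Set V) = (A : Set V)) :
    2 ^ (S.card - 2) ≤ w ∨ ∃ t, S ⊆ β t := by
  classical
  by_cases hbag : ∃ t, S ⊆ β t
  · exact Or.inr hbag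
  left
  push_neg at hbag
  set I : V → Set ι := fun v => {t : ι | v ∈ β t} with hIdef
  have hIne : ∀ v : V, (I v).Nonempty := by
    intro v
    obtain ⟨x⟩ := (hconn v).nonempty
    exact ⟨x.1, x.2⟩
  -- direction function: each node points towards a missing vertex's subtree
  have hdir : ∀ t : ι, ∃ (sv : V) (n : ι), sv ∈ S ∧ T.Adj t n ∧
      ∀ a ∈ I sv, (T.deleteEdges {s(t, n)}).Reachable n a := by
    intro t
    obtain ⟨sv, hsvS, hsvβ⟩ := Finset.not_subset.mp (hbag t)
    obtain ⟨a0, ha0⟩ := hIne sv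
    have hta : t ≠ a0 := fun h => hsvβ (h ▸ ha0)
    obtain ⟨wk⟩ := hT.isConnected.preconnected t a0
    obtain ⟨t1, n, ht1, hn, hadj, hreach⟩ :=
      Stmt7Aux.exit_lemma (P := {t}) (wk.toPath : T.Walk t a0)
        (wk.toPath.2.edges_nodup) rfl (fun h => hta (Set.mem_singleton_iff.mp h).symm)
    rw [Set.mem_singleton_iff] at ht1
    subst ht1
    refine ⟨sv, n, hsvS, hadj, ?_⟩
    intro a ha
    by_contra hna
    have hr : ¬ (T.deleteEdges {s(t1, n)}).Reachable a0 a := fun hr => hna (hreach.trans hr)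
    exact hsvβ (Stmt7Aux.cross_lemma (hconn sv) ha0 ha hr).1
  choose sfun g hsS hadj hside using hdir
  -- find a doubly-oriented edge
  haveI : Fintype ↥T.edgeSet := Fintype.ofFinite _
  have hdouble : ∃ t t' : ι, t' = g t ∧ t = g t' := by
    by_contra hcon
    push_neg at hcon
    have hinj : Function.Injective
        (fun t : ι => (⟨s(t, g t), by rw [mem_edgeFinset]; exact (hadj t)⟩ : T.edgeFinset)) := by
      intro x y hxy
      have := congrArg Subtype.val hxy
      simp only [Sym2.eq_iff] at this
      rcases this with ⟨h1, _⟩ | ⟨h1, h2⟩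
      · exact h1
      · exact absurd h1 (hcon x y h2.symm)
    have hle := Fintype.card_le_of_injective _ hinj
    rw [Fintype.card_coe] at hle
    have hcard := hT.card_edgeFinset
    omega
  obtain ⟨t0, t0', hgt0, hgt0'⟩ := hdouble
  set u : V := sfun t0' with hu
  set v : V := sfun t0 with hv
  have hvside : ∀ a ∈ I v, (T.deleteEdges {s(t0, t0')}).Reachable t0' a := by
    have := hside t0
    rw [← hgt0] at this
    exact this
  have huside : ∀ a ∈ I u, (T.deleteEdges {s(t0, t0')}).Reachable t0 a := by
    have := hside t0'
    rw [← hgt0', Sym2.eq_swap] at this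
    exact this
  have hadj0 : T.Adj t0 t0' := by have := hadj t0; rwa [← hgt0] at this
  have hbridge0 := Stmt7Aux.bridge_lemma hT.IsAcyclic hadj0
  have hdis : ∀ x, x ∈ I u → x ∈ I v → False := fun x hxu hxv =>
    hbridge0 ((huside x hxu).trans (hvside x hxv).symm)
  have hune : u ≠ v := by
    intro h
    obtain ⟨x, hx⟩ := hIne u
    exact hdis x hx (h ▸ hx)
  -- select the separating edge on the path from I u to I v
  obtain ⟨a, ha⟩ := hIne u
  obtain ⟨b, hb⟩ := hIne v
  obtain ⟨wk⟩ := hT.isConnected.preconnected a b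
  obtain ⟨t, t', ht, ht', hadj2, hreachb⟩ :=
    Stmt7Aux.exit_lemma (P := I u) (wk.toPath : T.Walk a b)
      (wk.toPath.2.edges_nodup) ha (fun h => hdis b h hb)
  have hbridge2 := Stmt7Aux.bridge_lemma hT.IsAcyclic hadj2
  have hIuside : ∀ x ∈ I u, (T.deleteEdges {s(t, t')}).Reachable t x := by
    intro x hx
    by_contra hr
    exact ht' (Stmt7Aux.cross_lemma (hconn u) ht hx hr).2
  have hIvside : ∀ x ∈ I v, (T.deleteEdges {s(t, t')}).Reachable t' x := by
    intro x hx
    by_contra hr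
    have hr2 : ¬ (T.deleteEdges {s(t, t')}).Reachable b x := fun h => hr (hreachb.trans h)
    exact hdis t ht (Stmt7Aux.cross_lemma (hconn v) hb hx hr2).1
  have hsep : ∀ x : V, G.Adj x u → G.Adj x v → x ∈ β t ∧ x ∈ β t' := by
    intro x hxu hxv
    obtain ⟨q1, hq1x, hq1u⟩ := hedge x u hxu
    obtain ⟨q2, hq2x, hq2v⟩ := hedge x v hxv
    have hr : ¬ (T.deleteEdges {s(t, t')}).Reachable q1 q2 := fun h =>
      hbridge2 ((hIuside q1 hq1u).trans (h.trans (hIvside q2 hq2v).symm))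
    exact Stmt7Aux.cross_lemma (hconn x) hq1x hq2x hr
  -- counting
  have huS : u ∈ S := hsS t0'
  have hvS : v ∈ S := hsS t0
  have huβt : u ∈ β t := ht
  set f : Finset V → V := fun A =>
    if h : (A ∪ {u, v} : Finset V) ⊆ S then (hshat _ h).choose else u with hf
  have hmain : ∀ A ∈ (S \ {u, v}).powerset,
      G.neighborSet (f A) ∩ (S : Set V) = ((A ∪ {u, v} : Finset V) : Set V) ∧
      f A ∈ (β t).erase u := by
    intro A hA
    rw [Finset.mem_powerset] at hA
    have hsub : (A ∪ {u, v} : Finset V) ⊆ S := by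
      intro x hx
      rw [Finset.mem_union] at hx
      rcases hx with hx | hx
      · exact (Finset.mem_sdiff.mp (hA hx)).1
      · rcases Finset.mem_insert.mp hx with rfl | hx
        · exact huS
        · rw [Finset.mem_singleton] at hx; exact hx ▸ hvS
    have hspec : G.neighborSet (f A) ∩ (S : Set V) = ((A ∪ {u, v} : Finset V) : Set V) := by
      rw [hf]; simp only [dif_pos hsub]; exact (hshat _ hsub).choose_spec
    have hadju : G.Adj (f A) u := by
      have : u ∈ G.neighborSet (f A) ∩ (S : Set V) := by
        rw [hspec]
        simp
      exact this.1
    have hadjv : G.Adj (f A) v := by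
      have : v ∈ G.neighborSet (f A) ∩ (S : Set V) := by
        rw [hspec]
        simp
      exact this.1
    refine ⟨hspec, Finset.mem_erase.mpr ⟨hadju.ne, (hsep _ hadju hadjv).1⟩⟩
  have hinj2 : Set.InjOn f ((S \ {u, v}).powerset : Set (Finset V)) := by
    intro A hA B hB hfe
    rw [Finset.mem_coe] at hA hB
    have hAs := (hmain A hA).1
    have hBs := (hmain B hB).1
    rw [hfe, hBs] at hAs
    have hfin : (B ∪ {u, v} : Finset V) = (A ∪ {u, v} : Finset V) := Finset.coe_injective hAs
    rw [Finset.mem_powerset] at hA hB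
    ext x
    constructor
    · intro hx
      have hx2 := Finset.mem_sdiff.mp (hA hx)
      have : x ∈ (B ∪ {u, v} : Finset V) := hfin ▸ Finset.mem_union_left _ hx
      rcases Finset.mem_union.mp this with h | h
      · exact h
      · exact absurd h hx2.2
    · intro hx
      have hx2 := Finset.mem_sdiff.mp (hB hx)
      have : x ∈ (A ∪ {u, v} : Finset V) := hfin ▸ Finset.mem_union_left _ hx
      rcases Finset.mem_union.mp this with h | h
      · exact h
      · exact absurd h hx2.2
  have hle := Finset.card_le_card_of_injOn f (fun A hA => (hmain A hA).2) hinj2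
  rw [Finset.card_powerset] at hle
  have hcardsd : (S \ {u, v} : Finset V).card = S.card - 2 := by
    rw [Finset.card_sdiff_of_subset]
    · congr 1
      rw [Finset.card_insert_of_notMem (by simp [hune]), Finset.card_singleton]
    · intro x hx
      rcases Finset.mem_insert.mp hx with rfl | hx
      · exact huS
      · rw [Finset.mem_singleton] at hx; exact hx ▸ hvS
  have herase : ((β t).erase u).card ≤ w := by
    rw [Finset.card_erase_of_mem huβt]
    have := hwidth t
    omega
  rw [hcardsd] at hle
  omega
end

section
/- In the reduction graph construction (see context), suppose |X| > k and there exist vertices u_1 ∈ U_1, …, u_k ∈ U_k that are pairwise related by R. Then G contains a shattered set of size k, namely S = {u_1, …, u_k}. -/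
/-- completeness of the reduction: in the reduction graph construction —
`G` a simple graph whose vertex set is partitioned into `X = U_1 ∪ ⋯ ∪ U_k` (the `U i`
finite, nonempty, pairwise disjoint), `I₁`, `I₂`, `I₃` (= I_{≥3}), with `X` independent,
`I₁` consisting exactly of the vertices with neighborhood `{u}` for each `u ∈ X`, `I₂` of
the vertices with neighborhood `{u, v}` for each pair `u ∈ U i`, `v ∈ U j`, `i ≠ j`,
`R u v`, and `I₃` of the vertices with neighborhood `⋃_{i ∈ A} U i` for each
`A ⊆ {1,…,k}` with `|A| ≥ 3` (`R` symmetric and irreflexive) — if `|X| > k` and there are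
`u i ∈ U i` pairwise related by `R`, then `S = {u 1, …, u k}` is a shattered set of `G`
of size `k`. -/
theorem stmt_14 {V : Type*} (G : SimpleGraph V) (k : ℕ) (hk : 3 ≤ k)
    (U : Fin k → Set V) (X I₁ I₂ I₃ : Set V) (R : V → V → Prop)
    (hUfin : ∀ i, (U i).Finite) (hUne : ∀ i, (U i).Nonempty)
    (hUdisj : ∀ i j, i ≠ j → Disjoint (U i) (U j))
    (hX : X = ⋃ i, U i)
    (hRsymm : ∀ u v, R u v → R v u) (hRirr : ∀ u, ¬ R u u)
    (hpart : ∀ v : V, v ∈ X ∨ v ∈ I₁ ∨ v ∈ I₂ ∨ v ∈ I₃)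
    (hd1 : Disjoint X I₁) (hd2 : Disjoint X I₂) (hd3 : Disjoint X I₃)
    (hd4 : Disjoint I₁ I₂) (hd5 : Disjoint I₁ I₃) (hd6 : Disjoint I₂ I₃)
    (hXind : ∀ u ∈ X, ∀ v ∈ X, ¬ G.Adj u v)
    (hI1 : ∀ w ∈ I₁, ∃ u ∈ X, G.neighborSet w = {u})
    (hI1' : ∀ u ∈ X, ∃ w ∈ I₁, G.neighborSet w = {u})
    (hI2 : ∀ w ∈ I₂, ∃ (i j : Fin k), ∃ u ∈ U i, ∃ v ∈ U j,
      i ≠ j ∧ R u v ∧ G.neighborSet w = {u, v})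
    (hI2' : ∀ (i j : Fin k), ∀ u ∈ U i, ∀ v ∈ U j, i ≠ j → R u v →
      ∃ w ∈ I₂, G.neighborSet w = {u, v})
    (hI3 : ∀ w ∈ I₃, ∃ A : Finset (Fin k), 3 ≤ A.card ∧
      G.neighborSet w = ⋃ i ∈ A, U i)
    (hI3' : ∀ A : Finset (Fin k), 3 ≤ A.card →
      ∃ w ∈ I₃, G.neighborSet w = ⋃ i ∈ A, U i)
    (hXcard : k < X.ncard)
    (u : Fin k → V) (hu : ∀ i, u i ∈ U i)
    (hR : ∀ i j, i ≠ j → R (u i) (u j)) :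
    (Set.range u).ncard = k ∧
      ∀ T ⊆ Set.range u, ∃ w : V, G.neighborSet w ∩ Set.range u = T := by
  have hinj : Function.Injective u := by
    intro i j hij
    by_contra hne
    exact (hUdisj i j hne).ne_of_mem (hu i) (hu j) hij
  have huX : ∀ i, u i ∈ X := by
    intro i; rw [hX]; exact Set.mem_iUnion.2 ⟨i, hu i⟩
  constructor
  · rw [← Set.image_univ, Set.ncard_image_of_injective _ hinj, Set.ncard_univ,
      Nat.card_eq_fintype_card, Fintype.card_fin]
  · intro T hT
    -- indices of T
    have hTfin : T.Finite := (Set.finite_range u).subset hT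
    classical
    set s : Finset (Fin k) := Finset.univ.filter (fun i => u i ∈ T) with hs
    have hTs : T = u '' ↑s := by
      ext v
      constructor
      · intro hv
        obtain ⟨i, rfl⟩ := hT hv
        exact ⟨i, by simp [hs, hv], rfl⟩
      · rintro ⟨i, hi, rfl⟩
        simp only [hs, Finset.coe_filter, Set.mem_setOf_eq] at hi
        exact hi.2
    rcases Nat.lt_or_ge s.card 3 with hlt | hge
    · interval_cases h : s.card
      · -- T empty
        have : s = ∅ := Finset.card_eq_zero.mp h
        have hTe : T = ∅ := by simp [hTs, this]
        have i0 : Fin k := ⟨0, by omega⟩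
        refine ⟨u i0, ?_⟩
        rw [hTe]
        ext v
        simp only [Set.mem_inter_iff, Set.mem_empty_iff_false, iff_false, not_and]
        rintro hadj ⟨j, rfl⟩
        exact hXind (u i0) (huX i0) (u j) (huX j) hadj
      · -- singleton
        obtain ⟨i, hi⟩ := Finset.card_eq_one.mp h
        obtain ⟨w, -, hw⟩ := hI1' (u i) (huX i)
        refine ⟨w, ?_⟩
        rw [hw, hTs, hi]
        ext v
        simp only [Set.mem_inter_iff, Set.mem_singleton_iff, Finset.coe_singleton,
          Set.image_singleton]
        constructor
        · rintro ⟨rfl, -⟩; rfl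
        · rintro rfl; exact ⟨rfl, ⟨i, rfl⟩⟩
      · -- pair
        obtain ⟨i, j, hij, hsij⟩ := Finset.card_eq_two.mp h
        obtain ⟨w, -, hw⟩ := hI2' i j (u i) (hu i) (u j) (hu j) hij (hR i j hij)
        refine ⟨w, ?_⟩
        rw [hw, hTs, hsij]
        ext v
        simp only [Set.mem_inter_iff, Set.mem_insert_iff, Set.mem_singleton_iff,
          Finset.coe_insert, Finset.coe_singleton, Set.image_insert_eq, Set.image_singleton]
        constructor
        · rintro ⟨(rfl | rfl), -⟩
          · exact Or.inl rfl
          · exact Or.inr rfl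
        · rintro (rfl | rfl)
          · exact ⟨Or.inl rfl, ⟨i, rfl⟩⟩
          · exact ⟨Or.inr rfl, ⟨j, rfl⟩⟩
    · -- |s| ≥ 3
      obtain ⟨w, -, hw⟩ := hI3' s hge
      refine ⟨w, ?_⟩
      rw [hw, hTs]
      ext v
      simp only [Set.mem_inter_iff, Set.mem_iUnion, Set.mem_image, Finset.mem_coe,
        Set.mem_range]
      constructor
      · rintro ⟨⟨i, hi, hvU⟩, j, rfl⟩
        refine ⟨j, ?_, rfl⟩
        obtain rfl : i = j := by
          by_contra hne
          exact (hUdisj i j hne).ne_of_mem hvU (hu j) rfl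
        exact hi
      · rintro ⟨i, hi, rfl⟩
        exact ⟨⟨i, hi, hu i⟩, ⟨i, rfl⟩⟩
end

section
/- In the reduction graph construction (see context), suppose G contains a shattered set S with |S| ≥ k. Then S contains exactly one vertex u_i from each U_i (i ∈ {1,…,k}), and these vertices u_1, …, u_k are pairwise related by R. -/
/-- soundness of the reduction: in the reduction graph construction —
`G` a simple graph whose vertex set is partitioned into `X = U_1 ∪ ⋯ ∪ U_k` (the `U i`
finite, nonempty, pairwise disjoint), `I₁`, `I₂`, `I₃` (= I_{≥3}), with `X` independent,
`I₁` consisting exactly of the vertices with neighborhood `{u}` for each `u ∈ X`, `I₂` of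
the vertices with neighborhood `{u, v}` for each pair `u ∈ U i`, `v ∈ U j`, `i ≠ j`,
`R u v`, and `I₃` of the vertices with neighborhood `⋃_{i ∈ A} U i` for each
`A ⊆ {1,…,k}` with `|A| ≥ 3` (`R` symmetric and irreflexive) — if `S` is a shattered set
of `G` with `|S| ≥ k`, then `S` consists of exactly one vertex `u i` from each `U i`, and
these vertices are pairwise related by `R`. -/
theorem stmt_15 {V : Type*} (G : SimpleGraph V) (k : ℕ) (hk : 3 ≤ k)
    (U : Fin k → Set V) (X I₁ I₂ I₃ : Set V) (R : V → V → Prop)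
    (hUfin : ∀ i, (U i).Finite) (hUne : ∀ i, (U i).Nonempty)
    (hUdisj : ∀ i j, i ≠ j → Disjoint (U i) (U j))
    (hX : X = ⋃ i, U i)
    (hRsymm : ∀ u v, R u v → R v u) (hRirr : ∀ u, ¬ R u u)
    (hpart : ∀ v : V, v ∈ X ∨ v ∈ I₁ ∨ v ∈ I₂ ∨ v ∈ I₃)
    (hd1 : Disjoint X I₁) (hd2 : Disjoint X I₂) (hd3 : Disjoint X I₃)
    (hd4 : Disjoint I₁ I₂) (hd5 : Disjoint I₁ I₃) (hd6 : Disjoint I₂ I₃)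
    (hXind : ∀ u ∈ X, ∀ v ∈ X, ¬ G.Adj u v)
    (hI1 : ∀ w ∈ I₁, ∃ u ∈ X, G.neighborSet w = {u})
    (hI1' : ∀ u ∈ X, ∃ w ∈ I₁, G.neighborSet w = {u})
    (hI2 : ∀ w ∈ I₂, ∃ (i j : Fin k), ∃ u ∈ U i, ∃ v ∈ U j,
      i ≠ j ∧ R u v ∧ G.neighborSet w = {u, v})
    (hI2' : ∀ (i j : Fin k), ∀ u ∈ U i, ∀ v ∈ U j, i ≠ j → R u v →
      ∃ w ∈ I₂, G.neighborSet w = {u, v})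
    (hI3 : ∀ w ∈ I₃, ∃ A : Finset (Fin k), 3 ≤ A.card ∧
      G.neighborSet w = ⋃ i ∈ A, U i)
    (hI3' : ∀ A : Finset (Fin k), 3 ≤ A.card →
      ∃ w ∈ I₃, G.neighborSet w = ⋃ i ∈ A, U i)
    (S : Set V) (hScard : (k : ℕ∞) ≤ S.encard)
    (hSsh : ∀ T ⊆ S, ∃ w : V, G.neighborSet w ∩ S = T) :
    ∃ u : Fin k → V, S = Set.range u ∧ (∀ i, u i ∈ U i) ∧
      ∀ i j, i ≠ j → R (u i) (u j) := by
  classical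
  have hmem : ∀ w v : V, v ∈ G.neighborSet w ↔ w ∈ G.neighborSet v := by
    intro w v
    simp only [SimpleGraph.mem_neighborSet]
    exact G.adj_comm w v
  have hUX : ∀ i, U i ⊆ X := by
    intro i; rw [hX]; exact Set.subset_iUnion U i
  have hclass : ∀ v ∈ X, ∃ i, v ∈ U i := by
    intro v hv; rw [hX] at hv; exact Set.mem_iUnion.mp hv
  have hclassU : ∀ {i j : Fin k} {v : V}, v ∈ U i → v ∈ U j → i = j := by
    intro i j v hi hj
    by_contra h
    exact Set.disjoint_left.mp (hUdisj i j h) hi hj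
  -- extract a finset F ⊆ S with card k
  obtain ⟨tS, htS, htScard⟩ := Set.exists_subset_encard_eq hScard
  have htfin : tS.Finite := Set.finite_of_encard_eq_coe htScard
  have hFS : ↑htfin.toFinset ⊆ S := by
    rw [Set.Finite.coe_toFinset]; exact htS
  set F : Finset V := htfin.toFinset with hF
  have hFcard : F.card = k := by
    have h1 : (↑F : Set V).encard = (F.card : ℕ∞) := Set.encard_coe_eq_coe_finsetCard F
    rw [hF, Set.Finite.coe_toFinset, htScard] at h1
    exact_mod_cast h1.symm
  -- helper to find extra elements of S distinct from given ones
  have hextra2 : ∀ a b : V, ∃ x ∈ S, x ≠ a ∧ x ≠ b := by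
    intro a b
    have h1 : 1 ≤ ((F.erase a).erase b).card := by
      have e1 : F.card - 1 ≤ (F.erase a).card := Finset.pred_card_le_card_erase
      have e2 : (F.erase a).card - 1 ≤ ((F.erase a).erase b).card :=
        Finset.pred_card_le_card_erase
      omega
    have h1' : 0 < ((F.erase a).erase b).card := by omega
    obtain ⟨x, hx⟩ := Finset.card_pos.mp h1'
    have hxb := Finset.ne_of_mem_erase hx
    have hx' := Finset.mem_of_mem_erase hx
    have hxa := Finset.ne_of_mem_erase hx'
    exact ⟨x, hFS (Finset.mem_of_mem_erase hx'), hxa, hxb⟩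
  have hk0 : (0 : ℕ) < k := by omega
  -- Step 1: S ⊆ X or S ∩ X = ∅
  have hsplit : (S ⊆ X) ∨ (∀ s ∈ S, s ∉ X) := by
    by_cases hall : ∀ s ∈ S, s ∈ X
    · exact Or.inl hall
    · right
      push_neg at hall
      obtain ⟨b, hbS, hbX⟩ := hall
      intro s hsS hsX
      obtain ⟨w, hw⟩ := hSsh {s, b} (by
        intro x hx
        rcases hx with rfl | rfl
        exacts [hsS, hbS])
      have hsN : s ∈ G.neighborSet w := by
        have : s ∈ G.neighborSet w ∩ S := by rw [hw]; exact Or.inl rfl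
        exact this.1
      have hbN : b ∈ G.neighborSet w := by
        have : b ∈ G.neighborSet w ∩ S := by rw [hw]; exact Or.inr rfl
        exact this.1
      rcases hpart w with hwX | hw1 | hw2 | hw3
      · exact hXind w hwX s hsX hsN
      · obtain ⟨p, hpX, hN⟩ := hI1 w hw1
        rw [hN] at hsN hbN
        rw [Set.mem_singleton_iff] at hsN hbN
        exact hbX (hbN ▸ hpX)
      · obtain ⟨i, j, p, hp, q, hq, hij, hR, hN⟩ := hI2 w hw2
        rw [hN] at hbN
        rcases hbN with rfl | rfl
        exacts [hbX (hUX i hp), hbX (hUX j hq)]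
      · obtain ⟨A, hA3, hN⟩ := hI3 w hw3
        rw [hN] at hbN
        obtain ⟨Ui', ⟨l, rfl⟩, hbU⟩ := hbN
        simp only [Set.mem_iUnion, exists_prop] at hbU
        obtain ⟨-, hbU⟩ := hbU
        exact hbX (hUX l hbU)
  rcases hsplit with hSX | hSY
  · -- MAIN CASE : S ⊆ X
    have htrX : ∀ w ∈ X, G.neighborSet w ∩ S = ∅ := by
      intro w hw
      ext v
      simp only [Set.mem_inter_iff, Set.mem_empty_iff_false, iff_false, not_and]
      intro hvN hvS
      exact hXind w hw v (hSX hvS) hvN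
    -- at most one element of S in each class
    have hsub : ∀ (i : Fin k) (a b : V), a ∈ S → b ∈ S → a ∈ U i → b ∈ U i → a = b := by
      intro i a b haS hbS haU hbU
      by_contra hab
      obtain ⟨x, hxS, hxa, hxb⟩ := hextra2 a b
      by_cases hy : ∃ y ∈ S, y ≠ a ∧ y ≠ b ∧ y ≠ x
      · obtain ⟨y, hyS, hya, hyb, hyx⟩ := hy
        obtain ⟨w, hw⟩ := hSsh {a, x, y} (by
          intro z hz
          rcases hz with rfl | rfl | rfl
          exacts [haS, hxS, hyS])
        have haN : a ∈ G.neighborSet w := by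
          have : a ∈ G.neighborSet w ∩ S := by rw [hw]; exact Or.inl rfl
          exact this.1
        have hxN : x ∈ G.neighborSet w := by
          have : x ∈ G.neighborSet w ∩ S := by rw [hw]; exact Or.inr (Or.inl rfl)
          exact this.1
        have hyN : y ∈ G.neighborSet w := by
          have : y ∈ G.neighborSet w ∩ S := by rw [hw]; exact Or.inr (Or.inr rfl)
          exact this.1
        rcases hpart w with hwX | hw1 | hw2 | hw3
        · rw [htrX w hwX] at hw
          exact (hxa : x ≠ a) (by
            have : x ∈ (∅ : Set V) := hw ▸ Or.inr (Or.inl rfl)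
            exact absurd this (Set.notMem_empty x))
        · obtain ⟨p, hpX, hN⟩ := hI1 w hw1
          rw [hN, Set.mem_singleton_iff] at haN hxN
          exact hxa (hxN.trans haN.symm)
        · obtain ⟨i', j', p, hp, q, hq, hij, hR, hN⟩ := hI2 w hw2
          rw [hN] at haN hxN hyN
          rcases haN with rfl | rfl <;> rcases hxN with h2 | h2 <;>
            rcases hyN with h3 | h3 <;> first
            | exact hxa h2
            | exact hya h3
            | exact hyx (h3.trans h2.symm)
        · obtain ⟨A, hA3, hN⟩ := hI3 w hw3
          have hiA : i ∈ A := by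
            rw [hN] at haN
            simp only [Set.mem_iUnion, exists_prop] at haN
            obtain ⟨l, hlA, haU'⟩ := haN
            exact (hclassU haU' haU) ▸ hlA
          have hbN : b ∈ G.neighborSet w := by
            rw [hN]
            simp only [Set.mem_iUnion, exists_prop]
            exact ⟨i, hiA, hbU⟩
          have : b ∈ ({a, x, y} : Set V) := hw ▸ ⟨hbN, hbS⟩
          rcases this with rfl | rfl | rfl
          exacts [hab rfl, hxb rfl, hyb rfl]
      · -- S ⊆ {a, b, x}, so k = 3
        push_neg at hy
        have hk3 : k = 3 := by
          have hsub3 : S ⊆ {a, b, x} := by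
            intro z hz
            by_cases hza : z = a
            · exact Or.inl hza
            by_cases hzb : z = b
            · exact Or.inr (Or.inl hzb)
            · exact Or.inr (Or.inr (hy z hz hza hzb))
          have h3 : S.encard ≤ 3 := by
            calc S.encard ≤ ({a, b, x} : Set V).encard := Set.encard_le_encard hsub3
            _ ≤ 3 := by
              apply le_trans (Set.encard_insert_le _ _)
              have := Set.encard_insert_le ({x} : Set V) b
              rw [Set.encard_singleton] at this
              calc ({b, x} : Set V).encard + 1 ≤ (1 + 1) + 1 := by
                    exact add_le_add this (le_refl 1)
                _ = 3 := by norm_num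
          have : (k : ℕ∞) ≤ 3 := le_trans hScard h3
          have : k ≤ 3 := by exact_mod_cast this
          omega
        obtain ⟨w, hw⟩ := hSsh {a, b} (by
          intro z hz
          rcases hz with rfl | rfl
          exacts [haS, hbS])
        have haN : a ∈ G.neighborSet w := by
          have : a ∈ G.neighborSet w ∩ S := by rw [hw]; exact Or.inl rfl
          exact this.1
        have hbN : b ∈ G.neighborSet w := by
          have : b ∈ G.neighborSet w ∩ S := by rw [hw]; exact Or.inr rfl
          exact this.1
        rcases hpart w with hwX | hw1 | hw2 | hw3
        · rw [htrX w hwX] at hw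
          exact absurd (hw ▸ (Or.inl rfl : a ∈ ({a, b} : Set V))) (Set.notMem_empty a)
        · obtain ⟨p, hpX, hN⟩ := hI1 w hw1
          rw [hN, Set.mem_singleton_iff] at haN hbN
          exact hab (haN.trans hbN.symm)
        · obtain ⟨i', j', p, hp, q, hq, hij, hR, hN⟩ := hI2 w hw2
          rw [hN] at haN hbN
          rcases haN with rfl | rfl <;> rcases hbN with h2 | h2
          · exact hab h2.symm
          · have e1 : i' = i := hclassU hp haU
            have e2 : j' = i := hclassU hq (h2 ▸ hbU)
            exact hij (e1.trans e2.symm)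
          · have e1 : j' = i := hclassU hq haU
            have e2 : i' = i := hclassU hp (h2 ▸ hbU)
            exact hij (e2.trans e1.symm)
          · exact hab h2.symm
        · obtain ⟨A, hA3, hN⟩ := hI3 w hw3
          -- x's class must be in A (since A = univ when k = 3), giving x ∈ {a,b}
          obtain ⟨m, hxm⟩ := hclass x (hSX hxS)
          have hAuniv : A = Finset.univ := by
            apply Finset.eq_univ_of_card
            have h1 : A.card ≤ Fintype.card (Fin k) := Finset.card_le_univ A
            rw [Fintype.card_fin] at h1 ⊢
            omega
          have hxN : x ∈ G.neighborSet w := by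
            rw [hN]
            simp only [Set.mem_iUnion, exists_prop]
            exact ⟨m, hAuniv ▸ Finset.mem_univ m, hxm⟩
          have : x ∈ ({a, b} : Set V) := hw ▸ ⟨hxN, hxS⟩
          rcases this with rfl | rfl
          exacts [hxa rfl, hxb rfl]
    -- every class meets S
    have hone : ∀ i, (S ∩ U i).Nonempty := by
      by_contra hcon
      push_neg at hcon
      obtain ⟨i, hi⟩ := hcon
      set c : V → Fin k := fun v => if h : ∃ j, v ∈ U j then h.choose else ⟨0, hk0⟩ with hc
      have hcU : ∀ v ∈ S, v ∈ U (c v) := by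
        intro v hv
        have h : ∃ j, v ∈ U j := hclass v (hSX hv)
        rw [hc]
        simp only [dif_pos h]
        exact h.choose_spec
      have hinj : Set.InjOn c S := by
        intro s hs t ht hst
        exact hsub (c s) s t hs ht (hcU s hs) (hst ▸ hcU t ht)
      have himg : c '' S ⊆ ↑(Finset.univ.erase i) := by
        rintro j ⟨v, hv, rfl⟩
        simp only [Finset.coe_erase, Set.mem_diff, Finset.coe_univ, Set.mem_univ, true_and,
          Set.mem_singleton_iff]
        intro hji
        have : v ∈ S ∩ U i := ⟨hv, hji ▸ hcU v hv⟩
        rw [hi] at this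
        exact this
      have h1 : S.encard = (c '' S).encard := (hinj.encard_image).symm
      have h2 : (c '' S).encard ≤ ((Finset.univ.erase i : Finset (Fin k)) : Set (Fin k)).encard :=
        Set.encard_le_encard himg
      rw [Set.encard_coe_eq_coe_finsetCard, Finset.card_erase_of_mem (Finset.mem_univ i),
        Finset.card_univ, Fintype.card_fin] at h2
      have : (k : ℕ∞) ≤ ((k - 1 : ℕ) : ℕ∞) := le_trans hScard (h1 ▸ h2)
      have : k ≤ k - 1 := by exact_mod_cast this
      omega
    -- define u
    set u : Fin k → V := fun i => (hone i).choose with hu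
    have huS : ∀ i, u i ∈ S := fun i => (hone i).choose_spec.1
    have huU : ∀ i, u i ∈ U i := fun i => (hone i).choose_spec.2
    have hune : ∀ i j, i ≠ j → u i ≠ u j := by
      intro i j hij h
      exact hij (hclassU (huU i) (h ▸ huU j))
    refine ⟨u, ?_, huU, ?_⟩
    · ext s
      constructor
      · intro hs
        obtain ⟨i, hsU⟩ := hclass s (hSX hs)
        exact ⟨i, (hsub i s (u i) hs (huS i) hsU (huU i)).symm⟩
      · rintro ⟨i, rfl⟩
        exact huS i
    · intro i j hij
      obtain ⟨w, hw⟩ := hSsh {u i, u j} (by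
        intro z hz
        rcases hz with rfl | rfl
        exacts [huS i, huS j])
      have haN : u i ∈ G.neighborSet w := by
        have : u i ∈ G.neighborSet w ∩ S := by rw [hw]; exact Or.inl rfl
        exact this.1
      have hbN : u j ∈ G.neighborSet w := by
        have : u j ∈ G.neighborSet w ∩ S := by rw [hw]; exact Or.inr rfl
        exact this.1
      rcases hpart w with hwX | hw1 | hw2 | hw3
      · rw [htrX w hwX] at hw
        have : u i ∈ (∅ : Set V) := by rw [hw]; exact Or.inl rfl
        exact absurd this (Set.notMem_empty _)
      · obtain ⟨p, hpX, hN⟩ := hI1 w hw1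
        rw [hN, Set.mem_singleton_iff] at haN hbN
        exact absurd (haN.trans hbN.symm) (hune i j hij)
      · obtain ⟨i', j', p, hp, q, hq, hij', hR, hN⟩ := hI2 w hw2
        rw [hN] at haN hbN
        rcases haN with h1 | h1 <;> rcases hbN with h2 | h2
        · exact absurd (h1.trans h2.symm) (hune i j hij)
        · exact h1 ▸ h2 ▸ hR
        · exact h1 ▸ h2 ▸ hRsymm p q hR
        · exact absurd (h1.trans h2.symm) (hune i j hij)
      · exfalso
        obtain ⟨A, hA3, hN⟩ := hI3 w hw3
        have hiA : i ∈ A := by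
          rw [hN] at haN
          simp only [Set.mem_iUnion, exists_prop] at haN
          obtain ⟨l, hlA, hU'⟩ := haN
          exact (hclassU hU' (huU i)) ▸ hlA
        have hjA : j ∈ A := by
          rw [hN] at hbN
          simp only [Set.mem_iUnion, exists_prop] at hbN
          obtain ⟨l, hlA, hU'⟩ := hbN
          exact (hclassU hU' (huU j)) ▸ hlA
        obtain ⟨l, hl⟩ : (A \ {i, j}).Nonempty := by
          rw [← Finset.card_pos]
          have h1 : A.card - ({i, j} : Finset (Fin k)).card ≤ (A \ {i, j}).card :=
            Finset.le_card_sdiff _ _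
          have h2 : ({i, j} : Finset (Fin k)).card ≤ 2 :=
            Finset.card_insert_le i {j} |>.trans (by simp)
          omega
        rw [Finset.mem_sdiff, Finset.mem_insert, Finset.mem_singleton] at hl
        obtain ⟨hlA, hlij⟩ := hl
        push_neg at hlij
        have hlN : u l ∈ G.neighborSet w := by
          rw [hN]
          simp only [Set.mem_iUnion, exists_prop]
          exact ⟨l, hlA, huU l⟩
        have : u l ∈ ({u i, u j} : Set V) := hw ▸ ⟨hlN, huS l⟩
        rcases this with h | h
        · exact hune l i hlij.1 h
        · exact hune l j hlij.2 h
  · -- IMPOSSIBLE CASE : S ∩ X = ∅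
    exfalso
    -- no element of S is in I₁
    have hnI1 : ∀ s ∈ S, s ∉ I₁ := by
      intro s hsS hs1
      obtain ⟨p, hpX, hN⟩ := hI1 s hs1
      obtain ⟨b, hbS, hba, -⟩ := hextra2 s s
      obtain ⟨w1, hw1⟩ := hSsh {s} (by rintro z rfl; exact hsS)
      obtain ⟨w2, hw2⟩ := hSsh {s, b} (by
        intro z hz; rcases hz with rfl | rfl; exacts [hsS, hbS])
      have e1 : w1 = p := by
        have h1 : s ∈ G.neighborSet w1 := by
          have : s ∈ G.neighborSet w1 ∩ S := by rw [hw1]; exact rfl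
          exact this.1
        have := (hmem w1 s).mp h1
        rw [hN] at this
        exact this
      have e2 : w2 = p := by
        have h1 : s ∈ G.neighborSet w2 := by
          have : s ∈ G.neighborSet w2 ∩ S := by rw [hw2]; exact Or.inl rfl
          exact this.1
        have := (hmem w2 s).mp h1
        rw [hN] at this
        exact this
      have : ({s} : Set V) = {s, b} := by rw [← hw1, ← hw2, e1, e2]
      have : b ∈ ({s} : Set V) := this ▸ (Or.inr rfl : b ∈ ({s, b} : Set V))
      exact hba this
    -- no element of S is in I₂
    have hnI2 : ∀ s ∈ S, s ∉ I₂ := by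
      intro s hsS hs2
      obtain ⟨i', j', p, hp, q, hq, hij, hR, hN⟩ := hI2 s hs2
      obtain ⟨b, hbS, hba, -⟩ := hextra2 s s
      obtain ⟨c, hcS, hca, hcb⟩ := hextra2 s b
      obtain ⟨w1, hw1⟩ := hSsh {s} (by rintro z rfl; exact hsS)
      obtain ⟨w2, hw2⟩ := hSsh {s, b} (by
        intro z hz; rcases hz with rfl | rfl; exacts [hsS, hbS])
      obtain ⟨w3, hw3⟩ := hSsh {s, c} (by
        intro z hz; rcases hz with rfl | rfl; exacts [hsS, hcS])
      have key : ∀ w : V, ∀ T : Set V, G.neighborSet w ∩ S = T → s ∈ T → w = p ∨ w = q := by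
        intro w T hT hsT
        have h1 : s ∈ G.neighborSet w := by
          have : s ∈ G.neighborSet w ∩ S := hT ▸ hsT
          exact this.1
        have := (hmem w s).mp h1
        rw [hN] at this
        exact this
      have hC12 : w1 = w2 → False := by
        intro h
        rw [h] at hw1
        have : b ∈ ({s} : Set V) := (hw1.symm.trans hw2) ▸ (Or.inr rfl : b ∈ ({s, b} : Set V))
        exact hba this
      have hC13 : w1 = w3 → False := by
        intro h
        rw [h] at hw1
        have : c ∈ ({s} : Set V) := (hw1.symm.trans hw3) ▸ (Or.inr rfl : c ∈ ({s, c} : Set V))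
        exact hca this
      have hC23 : w2 = w3 → False := by
        intro h
        rw [h] at hw2
        have : b ∈ ({s, c} : Set V) := (hw2.symm.trans hw3) ▸ (Or.inr rfl : b ∈ ({s, b} : Set V))
        rcases this with h' | h'
        exacts [hba h', hcb (Set.mem_singleton_iff.mp h').symm]
      rcases key w1 _ hw1 rfl with h1 | h1 <;>
        rcases key w2 _ hw2 (Or.inl rfl) with h2 | h2 <;>
        rcases key w3 _ hw3 (Or.inl rfl) with h3 | h3 <;>
        first
        | exact hC12 (h1.trans h2.symm)
        | exact hC13 (h1.trans h3.symm)
        | exact hC23 (h2.trans h3.symm)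
    have hSI3 : ∀ s ∈ S, s ∈ I₃ := by
      intro s hs
      rcases hpart s with h | h | h | h
      · exact absurd h (hSY s hs)
      · exact absurd h (hnI1 s hs)
      · exact absurd h (hnI2 s hs)
      · exact h
    -- the trace of w ∈ U l on S is determined by l
    have key : ∀ (w w' : V) (l : Fin k), w ∈ U l → w' ∈ U l →
        G.neighborSet w ∩ S = G.neighborSet w' ∩ S := by
      have aux : ∀ x ∈ S, ∀ (w w' : V) (l : Fin k), w ∈ U l → w' ∈ U l →
          x ∈ G.neighborSet w → x ∈ G.neighborSet w' := by
        intro x hx w w' l hw hw' hxw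
        obtain ⟨A, -, hNx⟩ := hI3 x (hSI3 x hx)
        have h1 : w ∈ G.neighborSet x := (hmem w x).mp hxw
        rw [hNx] at h1
        simp only [Set.mem_iUnion, exists_prop] at h1
        obtain ⟨j, hjA, hwj⟩ := h1
        have hlA : l ∈ A := (hclassU hwj hw) ▸ hjA
        apply (hmem w' x).mpr
        rw [hNx]
        simp only [Set.mem_iUnion, exists_prop]
        exact ⟨l, hlA, hw'⟩
      intro w w' l hw hw'
      ext x
      simp only [Set.mem_inter_iff]
      constructor
      · rintro ⟨h1, h2⟩; exact ⟨aux x h2 w w' l hw hw' h1, h2⟩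
      · rintro ⟨h1, h2⟩; exact ⟨aux x h2 w' w l hw' hw h1, h2⟩
    -- any realizer of a nonempty trace lies in some class
    have hreal : ∀ T : Finset V, ↑T ⊆ S → T.Nonempty →
        ∃ l : Fin k, ∃ w ∈ U l, G.neighborSet w ∩ S = ↑T := by
      intro T hT hTne
      obtain ⟨w, hw⟩ := hSsh ↑T hT
      obtain ⟨x, hx⟩ := hTne
      have hxS : x ∈ S := hT hx
      have hxN : x ∈ G.neighborSet w := by
        have : x ∈ G.neighborSet w ∩ S := by
          rw [hw]; exact hx
        exact this.1
      obtain ⟨A, -, hNx⟩ := hI3 x (hSI3 x hxS)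
      have h1 : w ∈ G.neighborSet x := (hmem w x).mp hxN
      rw [hNx] at h1
      simp only [Set.mem_iUnion, exists_prop] at h1
      obtain ⟨j, hjA, hwj⟩ := h1
      exact ⟨j, w, hwj, hw⟩
    -- the pigeonhole map
    set f : Finset V → Fin k := fun T =>
      if h : ↑T ⊆ S ∧ T.Nonempty then (hreal T h.1 h.2).choose else ⟨0, hk0⟩ with hf
    have hfspec : ∀ T : Finset V, (h : ↑T ⊆ S ∧ T.Nonempty) →
        ∃ w ∈ U (f T), G.neighborSet w ∩ S = ↑T := by
      intro T h
      rw [hf]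
      simp only [dif_pos h]
      exact (hreal T h.1 h.2).choose_spec
    -- the family of traces: singletons from F plus one pair
    obtain ⟨a, haF⟩ : F.Nonempty := by
      rw [← Finset.card_pos]; omega
    obtain ⟨b, hbF⟩ : (F.erase a).Nonempty := by
      rw [← Finset.card_pos]
      have := Finset.pred_card_le_card_erase (a := a) (s := F)
      omega
    have hba : b ≠ a := Finset.ne_of_mem_erase hbF
    have hbF' : b ∈ F := Finset.mem_of_mem_erase hbF
    set 𝒯 : Finset (Finset V) := insert {a, b} (F.image fun s => {s}) with h𝒯
    have h𝒯mem : ∀ T ∈ 𝒯, ↑T ⊆ S ∧ T.Nonempty := by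
      intro T hT
      rw [h𝒯, Finset.mem_insert] at hT
      rcases hT with rfl | hT
      · constructor
        · intro z hz
          simp only [Finset.coe_insert, Finset.coe_singleton, Set.mem_insert_iff,
            Set.mem_singleton_iff] at hz
          rcases hz with rfl | rfl
          exacts [hFS haF, hFS hbF']
        · exact ⟨a, Finset.mem_insert_self a {b}⟩
      · obtain ⟨s, hsF, rfl⟩ := Finset.mem_image.mp hT
        constructor
        · intro z hz
          simp only [Finset.coe_singleton, Set.mem_singleton_iff] at hz
          exact hz ▸ hFS hsF
        · exact ⟨s, Finset.mem_singleton_self s⟩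
    have hinj : Set.InjOn f ↑𝒯 := by
      intro T1 hT1 T2 hT2 hfe
      obtain ⟨w1, hw1U, hw1⟩ := hfspec T1 (h𝒯mem T1 hT1)
      obtain ⟨w2, hw2U, hw2⟩ := hfspec T2 (h𝒯mem T2 hT2)
      have := key w1 w2 (f T1) hw1U (hfe ▸ hw2U)
      have : (↑T1 : Set V) = ↑T2 := by rw [← hw1, ← hw2, this]
      exact_mod_cast this
    have hcard𝒯 : 𝒯.card = k + 1 := by
      rw [h𝒯]
      rw [Finset.card_insert_of_notMem, Finset.card_image_of_injective _ Finset.singleton_injective, hFcard]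
      intro hmem'
      obtain ⟨s, -, hs⟩ := Finset.mem_image.mp hmem'
      have : ({a, b} : Finset V).card = 1 := by rw [← hs]; exact Finset.card_singleton s
      rw [Finset.card_insert_of_notMem (by simpa using hba.symm), Finset.card_singleton] at this
      omega
    have hle : 𝒯.card ≤ (Finset.univ : Finset (Fin k)).card := by
      apply Finset.card_le_card_of_injOn f (fun T _ => Finset.mem_univ (f T))
      intro T1 hT1 T2 hT2 h
      exact hinj (by exact_mod_cast hT1) (by exact_mod_cast hT2) h
    rw [hcard𝒯, Finset.card_univ, Fintype.card_fin] at hle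
    omega
end
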